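/- arXiv:2007.03229 — 2 statements merged into one kernel-verified Lean document; each statement's English description precedes it below -/
import Mathlib

section
/- Let k be an algebraically closed field and X a finitely generated free abelian group. For every group homomorphism t : X → kˣ there exists a group homomorphism x : X → ℝ/ℤ such that ker t = ker x, i.e. {λ ∈ X : t(λ) = 1} = {λ ∈ X : x(λ) = 0}. -/
open Polynomial in
lemma aux_powers_indep {α : ℝ} (hα : Transcendental ℚ α) {ι : Type*} (s : Finset ι)
    (e : ι → ℕ) (he : Set.InjOn e s) (q : ι → ℚ)
    (h : ∑ j ∈ s, (q j : ℝ) * α ^ (e j) = 0) : ∀ j ∈ s, q j = 0 := by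
  classical
  rw [transcendental_iff] at hα
  have hp : (∑ j ∈ s, C (q j) * X ^ (e j) : ℚ[X]) = 0 := by
    apply hα
    rw [map_sum]
    simpa [Polynomial.aeval_def, Polynomial.eval₂_mul, Polynomial.eval₂_pow] using h
  intro j₀ hj₀
  have hc := congrArg (fun p => Polynomial.coeff p (e j₀)) hp
  simp only [Polynomial.finset_sum_coeff, Polynomial.coeff_C_mul, Polynomial.coeff_X_pow,
    Polynomial.coeff_zero] at hc
  rw [Finset.sum_eq_single j₀] at hc
  · simpa using hc
  · intro j hj hjj
    rw [if_neg (fun hcon => hjj (he hj hj₀ hcon.symm)), mul_zero]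
  · intro hcon; exact absurd hj₀ hcon

lemma aux_sum_div_int {κ : Type*} [Fintype κ] [DecidableEq κ] (a : κ → ℤ)
    (ha : ∀ i, a i ≠ 0) (hcop : ∀ i j, i ≠ j → IsCoprime (a i) (a j))
    (c : κ → ℤ) (m : ℤ) (h : ∑ i, (c i : ℚ) / (a i : ℚ) = (m : ℚ)) :
    ∀ i, a i ∣ c i := by
  intro i₀
  set Q : κ → ℤ := fun i => ∏ j ∈ Finset.univ.erase i, a j with hQ
  have hPQ : ∀ i, a i * Q i = ∏ j, a j := fun i => Finset.mul_prod_erase _ _ (Finset.mem_univ i)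
  have key : ∑ i, c i * Q i = m * ∏ j, a j := by
    have := congrArg (fun x : ℚ => x * (∏ j, (a j : ℚ))) h
    rw [Finset.sum_mul] at this
    have h2 : ∀ i ∈ Finset.univ, ((c i : ℚ) / (a i : ℚ)) * ∏ j, (a j : ℚ) = ((c i * Q i : ℤ) : ℚ) := by
      intro i _
      have h3 : ((a i : ℚ)) * ((Q i : ℚ)) = ∏ j, (a j : ℚ) := by
        rw [← Int.cast_mul, hPQ i, Int.cast_prod]
      rw [← h3]
      push_cast
      rw [div_mul_eq_mul_div, mul_comm ((a i:ℚ)) _, ← mul_assoc, mul_div_assoc,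
        div_self (by exact_mod_cast ha i), mul_one]
    rw [Finset.sum_congr rfl h2, ← Int.cast_sum] at this
    have : ((∑ i, c i * Q i : ℤ) : ℚ) = ((m * ∏ j, a j : ℤ) : ℚ) := by push_cast at this ⊢; linarith [this]
    exact_mod_cast this
  have hdvd : a i₀ ∣ c i₀ * Q i₀ := by
    have h1 : a i₀ ∣ m * ∏ j, a j := Dvd.dvd.mul_left (Finset.dvd_prod_of_mem a (Finset.mem_univ i₀)) m
    have h2 : a i₀ ∣ ∑ i ∈ Finset.univ.erase i₀, c i * Q i := by
      apply Finset.dvd_sum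
      intro j hj
      apply Dvd.dvd.mul_left
      exact Finset.dvd_prod_of_mem a (Finset.mem_erase.mpr ⟨(Finset.mem_erase.mp hj).1.symm, Finset.mem_univ _⟩)
    have h3 := Finset.add_sum_erase Finset.univ (fun i => c i * Q i) (Finset.mem_univ i₀)
    rw [key] at h3
    have h4 : c i₀ * Q i₀ = m * ∏ j, a j - ∑ i ∈ Finset.univ.erase i₀, c i * Q i := by linarith
    rw [h4]
    exact dvd_sub h1 h2
  have hcop' : IsCoprime (a i₀) (Q i₀) := by
    apply IsCoprime.prod_right
    intro j hj
    exact hcop i₀ j (Finset.mem_erase.mp hj).1.symm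
  exact (IsCoprime.dvd_of_dvd_mul_right hcop' hdvd)

lemma aux_field_roots {k : Type*} [Field k] {p : ℕ} (hp : p.Prime) (u v : kˣ)
    (hu : u ^ (p : ℤ) = 1) (hv : v ^ (p : ℤ) = 1)
    (h : ∀ a b : ℤ, u ^ a * v ^ b = 1 → (p : ℤ) ∣ a ∧ (p : ℤ) ∣ b) : False := by
  classical
  have hppos : 0 < p := hp.pos
  set φ : Fin p × Fin p → k := fun x => (u : k) ^ (x.1 : ℕ) * (v : k) ^ (x.2 : ℕ) with hφ
  have hmem : ∀ x : Fin p × Fin p, φ x ∈ Polynomial.nthRootsFinset p (1 : k) := by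
    intro x
    rw [Polynomial.mem_nthRootsFinset hppos]
    have h1 : ((u : k) ^ (x.1 : ℕ)) ^ p = 1 := by
      rw [← pow_mul, mul_comm, pow_mul]
      have : (u : kˣ) ^ p = 1 := by exact_mod_cast (by rw [← zpow_natCast]; exact hu)
      rw [← Units.val_pow_eq_pow_val, this, Units.val_one, one_pow]
    have h2 : ((v : k) ^ (x.2 : ℕ)) ^ p = 1 := by
      rw [← pow_mul, mul_comm, pow_mul]
      have : (v : kˣ) ^ p = 1 := by exact_mod_cast (by rw [← zpow_natCast]; exact hv)
      rw [← Units.val_pow_eq_pow_val, this, Units.val_one, one_pow]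
    rw [hφ, mul_pow, h1, h2, one_mul]
  have hinj : Function.Injective φ := by
    rintro ⟨a, b⟩ ⟨a', b'⟩ hab
    simp only [hφ] at hab
    have habu : u ^ (a : ℕ) * v ^ (b : ℕ) = u ^ (a' : ℕ) * v ^ (b' : ℕ) := by
      ext; push_cast; exact hab
    have habz : u ^ ((a : ℕ) : ℤ) * v ^ ((b : ℕ) : ℤ) = u ^ ((a' : ℕ) : ℤ) * v ^ ((b' : ℕ) : ℤ) := by
      simpa [zpow_natCast] using habu
    have hz : u ^ ((a : ℤ) - (a' : ℤ)) * v ^ ((b : ℤ) - (b' : ℤ)) = 1 := by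
      rw [zpow_sub, zpow_sub, mul_mul_mul_comm, ← mul_inv, mul_inv_eq_one]
      exact habz
    obtain ⟨hda, hdb⟩ := h _ _ hz
    have ha : ((a : ℤ) - (a' : ℤ)) = 0 := Int.eq_zero_of_abs_lt_dvd hda (by
      have h1 := a.isLt; have h2 := a'.isLt; rw [abs_lt]; omega)
    have hb : ((b : ℤ) - (b' : ℤ)) = 0 := Int.eq_zero_of_abs_lt_dvd hdb (by
      have h1 := b.isLt; have h2 := b'.isLt; rw [abs_lt]; omega)
    have : (a : ℕ) = a' := by omega
    have : (b : ℕ) = b' := by omega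
    ext <;> simp_all
  have hcard : p * p ≤ (Polynomial.nthRootsFinset p (1 : k)).card := by
    have := Finset.card_le_card_of_injOn (s := (Finset.univ : Finset (Fin p × Fin p)))
      φ (fun x _ => hmem x) (hinj.injOn)
    simpa using this
  have hle : (Polynomial.nthRootsFinset p (1 : k)).card ≤ p := by
    apply le_trans (Multiset.toFinset_card_le _)
    exact_mod_cast Polynomial.card_nthRoots p (1 : k)
  have := hp.two_le
  nlinarith

/-- For `k` an algebraically closed field and `X` a finitely generated free abelian group,
every homomorphism `t : X → kˣ` has the same kernel as some homomorphism `x : X → ℝ/ℤ`. -/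
theorem exists_addCircle_hom_ker_eq_of_units_hom
    (k : Type*) [Field k] [IsAlgClosed k]
    (X : Type*) [AddCommGroup X] [Module.Free ℤ X] [Module.Finite ℤ X]
    (t : X →+ Additive kˣ) :
    ∃ x : X →+ AddCircle (1 : ℝ),
      {lam : X | Additive.toMul (t lam) = 1} = {lam : X | x lam = 0} := by
  classical
  set L : Submodule ℤ X := AddSubgroup.toIntSubmodule t.ker with hL
  have hLmem : ∀ y : X, y ∈ L ↔ Additive.toMul (t y) = 1 := by
    intro y
    rw [hL]
    change y ∈ (AddSubgroup.toIntSubmodule t.ker : Set X) ↔ _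
    rw [AddSubgroup.coe_toIntSubmodule]
    rw [show (y ∈ (t.ker : Set X)) = (y ∈ t.ker) from rfl, AddMonoidHom.mem_ker, toMul_eq_one]
  obtain ⟨n, snf⟩ := L.smithNormalForm (Module.Free.chooseBasis ℤ X)
  -- the diagonal entries are nonzero
  have ha : ∀ i, snf.a i ≠ 0 := by
    intro i hai
    apply snf.bN.ne_zero i
    have := snf.snf i
    rw [hai, zero_smul] at this
    exact Subtype.ext this
  -- membership characterization
  have hmem : ∀ y : X, y ∈ L ↔
      ((∀ j, j ∉ Set.range snf.f → snf.bM.repr y j = 0) ∧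
        (∀ i, snf.a i ∣ snf.bM.repr y (snf.f i))) := by
    intro y
    constructor
    · intro hy
      refine ⟨fun j hj => snf.repr_eq_zero_of_notMem_range ⟨y, hy⟩ hj, fun i => ?_⟩
      have := snf.repr_apply_embedding_eq_repr_smul ⟨y, hy⟩ (i := i)
      rw [map_smul] at this
      exact ⟨snf.bN.repr ⟨y, hy⟩ i, by simpa using this⟩
    · rintro ⟨h1, h2⟩
      choose d hd using h2
      set m : L := ∑ i, d i • snf.bN i with hm
      have hcoe : (m : X) = ∑ i, (snf.a i * d i) • snf.bM (snf.f i) := by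
        rw [hm]
        push_cast
        refine Finset.sum_congr rfl fun i _ => ?_
        rw [snf.snf i, smul_smul, mul_comm]
      have hy : y = (m : X) := by
        apply snf.bM.repr.injective
        ext j
        rw [hcoe, map_sum]
        simp only [map_smul, Module.Basis.repr_self, Finsupp.smul_single, smul_eq_mul, mul_one,
          Finsupp.coe_finset_sum, Finset.sum_apply, Finsupp.single_apply]
        by_cases hj : j ∈ Set.range snf.f
        · obtain ⟨i₀, rfl⟩ := hj
          rw [Finset.sum_eq_single i₀]
          · rw [if_pos rfl, ← hd i₀]
          · intro i _ hii
            rw [if_neg (fun hc => hii (snf.f.injective hc))]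
          · intro hc; exact absurd (Finset.mem_univ i₀) hc
        · rw [h1 j hj, Finset.sum_eq_zero]
          intro i _
          rw [if_neg (fun hc => hj ⟨i, hc⟩)]
      rw [hy]
      exact m.2
  -- auxiliary: evaluating t on integer combinations
  have htz : ∀ (c : ℤ) (y : X), Additive.toMul (t (c • y)) = Additive.toMul (t y) ^ c := by
    intro c y
    rw [map_zsmul, toMul_zsmul]
  -- coprimality of the diagonal entries
  have hcop : ∀ i j : Fin n, i ≠ j → IsCoprime (snf.a i) (snf.a j) := by
    intro i j hij
    rw [Int.isCoprime_iff_gcd_eq_one]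
    by_contra hg
    obtain ⟨p, hp, hpdvd⟩ := Nat.exists_prime_and_dvd hg
    have hpi : (p : ℤ) ∣ snf.a i := dvd_trans (Int.natCast_dvd_natCast.mpr hpdvd) (Int.gcd_dvd_left _ _)
    have hpj : (p : ℤ) ∣ snf.a j := dvd_trans (Int.natCast_dvd_natCast.mpr hpdvd) (Int.gcd_dvd_right _ _)
    obtain ⟨si, hsi⟩ := hpi
    obtain ⟨sj, hsj⟩ := hpj
    have hsi0 : si ≠ 0 := fun hc => ha i (by rw [hsi, hc, mul_zero])
    have hsj0 : sj ≠ 0 := fun hc => ha j (by rw [hsj, hc, mul_zero])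
    set y₁ : X := si • snf.bM (snf.f i) with hy₁
    set y₂ : X := sj • snf.bM (snf.f j) with hy₂
    have hrepr : ∀ c d : ℤ, snf.bM.repr (c • y₁ + d • y₂) =
        Finsupp.single (snf.f i) (c * si) + Finsupp.single (snf.f j) (d * sj) := by
      intro c d
      rw [hy₁, hy₂, map_add, map_smul, map_smul, map_smul, map_smul,
        Module.Basis.repr_self, Module.Basis.repr_self]
      simp [Finsupp.smul_single, smul_smul]
    have hmemL : ∀ c d : ℤ, (c • y₁ + d • y₂) ∈ L ↔ ((p:ℤ) ∣ c ∧ (p:ℤ) ∣ d) := by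
      intro c d
      rw [hmem, hrepr]
      constructor
      · rintro ⟨-, h2⟩
        have e1 := h2 i
        have e2 := h2 j
        rw [Finsupp.add_apply, Finsupp.single_apply, Finsupp.single_apply] at e1 e2
        rw [if_pos rfl, if_neg (by exact fun hc => hij (snf.f.injective hc.symm)), add_zero] at e1
        rw [if_neg (by exact fun hc => hij (snf.f.injective hc)), if_pos rfl, zero_add] at e2
        rw [hsi] at e1
        rw [hsj] at e2
        exact ⟨(mul_dvd_mul_iff_right hsi0).mp e1, (mul_dvd_mul_iff_right hsj0).mp e2⟩
      · rintro ⟨⟨c', rfl⟩, ⟨d', rfl⟩⟩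
        constructor
        · intro j' hj'
          rw [Finsupp.add_apply, Finsupp.single_apply, Finsupp.single_apply,
            if_neg (fun hc => hj' ⟨i, hc⟩), if_neg (fun hc => hj' ⟨j, hc⟩), add_zero]
        · intro i'
          rw [Finsupp.add_apply, Finsupp.single_apply, Finsupp.single_apply]
          by_cases h1 : i = i'
          · subst h1
            rw [if_pos rfl, if_neg (fun hc => hij (snf.f.injective hc).symm), add_zero, hsi]
            exact ⟨c', by ring⟩
          · rw [if_neg (fun hc => h1 (snf.f.injective hc))]
            by_cases h2 : j = i'
            · subst h2
              rw [if_pos rfl, zero_add, hsj]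
              exact ⟨d', by ring⟩
            · rw [if_neg (fun hc => h2 (snf.f.injective hc)), add_zero]
              exact dvd_zero _
    set u := Additive.toMul (t y₁) with hu'
    set v := Additive.toMul (t y₂) with hv'
    have hcomb : ∀ c d : ℤ, Additive.toMul (t (c • y₁ + d • y₂)) = u ^ c * v ^ d := by
      intro c d
      rw [map_add, toMul_add, htz c y₁, htz d y₂]
    refine aux_field_roots hp u v ?_ ?_ ?_
    · have : (p : ℤ) • y₁ + (0 : ℤ) • y₂ ∈ L := by
        rw [hmemL]
        exact ⟨dvd_rfl, dvd_zero _⟩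
      have h1 := (hLmem _).mp this
      rw [hcomb] at h1
      rwa [zpow_zero, mul_one] at h1
    · have : (0 : ℤ) • y₁ + (p : ℤ) • y₂ ∈ L := by
        rw [hmemL]
        exact ⟨dvd_zero _, dvd_rfl⟩
      have h1 := (hLmem _).mp this
      rw [hcomb] at h1
      rwa [zpow_zero, one_mul] at h1
    · intro c d hcd
      rw [← hmemL]
      rw [hLmem, hcomb]
      exact hcd
  -- transcendental number
  have hαZ : Transcendental ℤ (liouvilleNumber 3) := transcendental_liouvilleNumber (by norm_num)
  have hα : Transcendental ℚ (liouvilleNumber 3) :=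
    fun hal => hαZ ((IsFractionRing.isAlgebraic_iff ℤ ℚ ℝ).mpr hal)
  set α : ℝ := liouvilleNumber 3 with hαdef
  -- injective exponent function
  set e : Module.Free.ChooseBasisIndex ℤ X → ℕ :=
    fun j => ((Fintype.equivFin (Module.Free.ChooseBasisIndex ℤ X)) j : ℕ) with he'
  have he : Function.Injective e := fun j j' hjj =>
    (Fintype.equivFin (Module.Free.ChooseBasisIndex ℤ X)).injective (Fin.ext hjj)
  -- the real values
  set r : Module.Free.ChooseBasisIndex ℤ X → ℝ := fun j =>
    if h : ∃ i, snf.f i = j then ((snf.a h.choose : ℝ))⁻¹ else α ^ (e j + 1) with hr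
  have hrf : ∀ i, r (snf.f i) = ((snf.a i : ℝ))⁻¹ := by
    intro i
    have hex : ∃ i', snf.f i' = snf.f i := ⟨i, rfl⟩
    rw [hr]
    simp only
    rw [dif_pos hex]
    have : hex.choose = i := snf.f.injective hex.choose_spec
    rw [this]
  have hrnf : ∀ j, j ∉ Set.range snf.f → r j = α ^ (e j + 1) := by
    intro j hj
    rw [hr]
    simp only
    rw [dif_neg (fun hc => hj ⟨hc.choose, hc.choose_spec⟩)]
  -- the homomorphism
  set x₀ : X →ₗ[ℤ] AddCircle (1:ℝ) :=
    snf.bM.constr ℕ (fun j => ((r j : ℝ) : AddCircle (1:ℝ))) with hx₀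
  have hxval : ∀ y : X, x₀ y = (((∑ j, (snf.bM.repr y j : ℝ) * r j : ℝ)) : AddCircle (1:ℝ)) := by
    intro y
    rw [hx₀, Module.Basis.constr_apply_fintype]
    have h2 : (((∑ j, (snf.bM.repr y j : ℝ) * r j : ℝ)) : AddCircle (1:ℝ)) =
        ∑ j, (snf.bM.repr y j) • (((r j : ℝ)) : AddCircle (1:ℝ)) := by
      change QuotientAddGroup.mk' _ _ = _
      rw [show (∑ j, (snf.bM.repr y j : ℝ) * r j) = ∑ j, (snf.bM.repr y j) • r j by
        refine Finset.sum_congr rfl fun j _ => (zsmul_eq_mul _ _).symm]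
      rw [map_sum]
      refine Finset.sum_congr rfl fun j _ => ?_
      rw [map_zsmul]
      rfl
    rw [h2]
    refine Finset.sum_congr rfl fun j _ => ?_
    rw [Module.Basis.equivFun_apply]
  refine ⟨x₀.toAddMonoidHom, ?_⟩
  ext lam
  simp only [Set.mem_setOf_eq, LinearMap.toAddMonoidHom_coe]
  rw [← hLmem, hxval, AddCircle.coe_eq_zero_iff, hmem]
  set c : Module.Free.ChooseBasisIndex ℤ X → ℤ := fun j => snf.bM.repr lam j with hc
  simp only [show ∀ j, (snf.bM.repr lam) j = c j from fun j => rfl]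
  -- split the sum
  set F : Finset (Module.Free.ChooseBasisIndex ℤ X) := Finset.univ.image snf.f with hF
  have hFmem : ∀ j, j ∈ F ↔ j ∈ Set.range snf.f := by
    intro j
    rw [hF, Finset.mem_image]
    constructor
    · rintro ⟨i, -, rfl⟩; exact ⟨i, rfl⟩
    · rintro ⟨i, rfl⟩; exact ⟨i, Finset.mem_univ i, rfl⟩
  have hsplit : ∑ j, (c j : ℝ) * r j =
      (∑ i : Fin n, (c (snf.f i) : ℝ) * ((snf.a i : ℝ))⁻¹) +
        ∑ j ∈ Finset.univ \ F, (c j : ℝ) * α ^ (e j + 1) := by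
    rw [← Finset.sum_sdiff (Finset.subset_univ F), add_comm]
    congr 1
    · rw [hF, Finset.sum_image (fun i _ i' _ h => snf.f.injective h)]
      refine Finset.sum_congr rfl fun i _ => ?_
      rw [hrf]
    · refine Finset.sum_congr rfl fun j hj => ?_
      have hjn : j ∉ Set.range snf.f := fun hcr => (Finset.mem_sdiff.mp hj).2 ((hFmem j).mpr hcr)
      rw [hrnf j hjn]
  constructor
  · -- lam ∈ L → x lam = 0
    rintro ⟨h1, h2⟩
    choose d hd using h2
    refine ⟨∑ i, d i, ?_⟩
    rw [hsplit]
    have hz : ∑ j ∈ Finset.univ \ F, (c j : ℝ) * α ^ (e j + 1) = 0 := by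
      refine Finset.sum_eq_zero fun j hj => ?_
      have hz0 : c j = 0 := h1 j (fun hc' => (Finset.mem_sdiff.mp hj).2 ((hFmem j).mpr hc'))
      rw [hz0]
      norm_num
    rw [hz, add_zero]
    have hterm : ∀ i : Fin n, (c (snf.f i) : ℝ) * ((snf.a i : ℝ))⁻¹ = (d i : ℝ) := by
      intro i
      rw [show c (snf.f i) = snf.a i * d i from hd i]
      push_cast
      rw [mul_comm (snf.a i : ℝ), mul_assoc, mul_inv_cancel₀ (by exact_mod_cast ha i), mul_one]
    rw [Finset.sum_congr rfl (fun i _ => hterm i), zsmul_eq_mul, mul_one]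
    push_cast
    rfl
  · -- x lam = 0 → lam ∈ L
    rintro ⟨m, hm⟩
    have hm2 : ∑ j, (c j : ℝ) * r j = (m : ℝ) := by rw [← hm, zsmul_eq_mul, mul_one]
    rw [hsplit] at hm2
    -- set up the independence argument over Option ι
    set S : Finset (Module.Free.ChooseBasisIndex ℤ X) := Finset.univ \ F with hS
    set q0 : ℚ := (∑ i : Fin n, (c (snf.f i) : ℚ) / (snf.a i : ℚ)) - m with hq0
    set s' : Finset (Option (Module.Free.ChooseBasisIndex ℤ X)) := insert none (S.image some) with hs'
    set e' : Option (Module.Free.ChooseBasisIndex ℤ X) → ℕ := fun o => o.elim 0 (fun j => e j + 1) with he''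
    set q' : Option (Module.Free.ChooseBasisIndex ℤ X) → ℚ := fun o => o.elim q0 (fun j => (c j : ℚ)) with hq'
    have hsum : ∑ o ∈ s', (q' o : ℝ) * α ^ (e' o) = 0 := by
      rw [hs', Finset.sum_insert (by
        simp only [Finset.mem_image]
        rintro ⟨j, -, hj⟩
        exact Option.some_ne_none _ hj)]
      rw [Finset.sum_image (fun j _ j' _ h => Option.some.inj h)]
      have hq0r : (q0 : ℝ) = (∑ i : Fin n, (c (snf.f i) : ℝ) * ((snf.a i : ℝ))⁻¹) - m := by
        rw [hq0]
        push_cast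
        rw [sub_left_inj]
        refine Finset.sum_congr rfl fun i _ => ?_
        rw [div_eq_mul_inv]
      simp only [hq', he'', Option.elim]
      rw [hq0r]
      rw [pow_zero, mul_one]
      have : ∑ j ∈ S, (c j : ℝ) * α ^ (e j + 1) =
          m - (∑ i : Fin n, (c (snf.f i) : ℝ) * ((snf.a i : ℝ))⁻¹) := by
        rw [hS]; linarith [hm2]
      push_cast
      linarith [this]
    have hinj' : Set.InjOn e' s' := by
      rintro o ho o' ho' hoo
      match o, o' with
      | none, none => rfl
      | none, some j' => simp [he''] at hoo
      | some j, none => simp [he''] at hoo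
      | some j, some j' =>
        simp only [he'', Option.elim] at hoo
        exact congrArg some (he (by omega))
    have hzero := aux_powers_indep hα s' e' hinj' q' hsum
    have hq0z : q0 = 0 := by
      have := hzero none (Finset.mem_insert_self _ _)
      simpa [hq'] using this
    have hcz : ∀ j ∈ S, c j = 0 := by
      intro j hj
      have := hzero (some j) (by
        rw [hs']
        exact Finset.mem_insert_of_mem (Finset.mem_image_of_mem some hj))
      simp only [hq', Option.elim] at this
      exact_mod_cast this
    have hdvd : ∀ i, snf.a i ∣ c (snf.f i) := by
      have hsumq : ∑ i : Fin n, (c (snf.f i) : ℚ) / (snf.a i : ℚ) = (m : ℚ) := by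
        have : q0 = 0 := hq0z
        rw [hq0] at this
        linarith [this]
      exact aux_sum_div_int (fun i => snf.a i) ha
        (fun i j hij => hcop i j hij) (fun i => c (snf.f i)) m hsumq
    refine ⟨fun j hj => hcz j (by
      rw [hS, Finset.mem_sdiff]
      exact ⟨Finset.mem_univ j, fun hc' => hj ((hFmem j).mp hc')⟩), fun i => hdvd i⟩
end

section
/- Let Φ be a reduced irreducible crystallographic root system in a finite-dimensional real vector space V, with base (set of simple roots) Δ, positive roots Φ⁺, and highest root γ. Let x be an element of the dual space V* lying in the closed fundamental alcove, i.e. ⟨α, x⟩ ≥ 0 for every α ∈ Δ and ⟨γ, x⟩ ≤ 1. Define S := {α ∈ Δ : ⟨α, x⟩ = 0} ∪ {−γ : if ⟨γ, x⟩ = 1}, a subset of Δ ∪ {−γ}. Then {α ∈ Φ : ⟨α, x⟩ ∈ ℤ} = ℤS ∩ Φ, where ℤS denotes the set of integer linear combinations of elements of S. -/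
/-- Let `Φ` be a reduced irreducible crystallographic root system in a finite-dimensional real
vector space `V`, with base `Δ`, and highest root `γ`. If `x ∈ V*` lies in the closed
fundamental alcove (`⟨α,x⟩ ≥ 0` for `α ∈ Δ` and `⟨γ,x⟩ ≤ 1`), and
`S = {α ∈ Δ | ⟨α,x⟩ = 0} ∪ {−γ if ⟨γ,x⟩ = 1}`, then
`{α ∈ Φ | ⟨α,x⟩ ∈ ℤ} = ℤS ∩ Φ`. -/
theorem roots_integral_on_alcove_point_eq_span_affine_subset
    (V : Type*) [AddCommGroup V] [Module ℝ V] [FiniteDimensional ℝ V]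
    (Φ : Set V) (hfin : Φ.Finite) (hspan : Submodule.span ℝ Φ = ⊤)
    (coroot : V → Module.Dual ℝ V)
    (h2 : ∀ α ∈ Φ, coroot α α = 2)
    (hint : ∀ α ∈ Φ, ∀ β ∈ Φ, ∃ n : ℤ, coroot α β = n)
    (hrefl : ∀ α ∈ Φ, ∀ β ∈ Φ, β - coroot α β • α ∈ Φ)
    (hred : ∀ α ∈ Φ, ∀ c : ℝ, c • α ∈ Φ → c = 1 ∨ c = -1)
    (hirr : ¬ ∃ Φ₁ Φ₂ : Set V, Φ₁.Nonempty ∧ Φ₂.Nonempty ∧ Φ = Φ₁ ∪ Φ₂ ∧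
      ∀ α ∈ Φ₁, ∀ β ∈ Φ₂, coroot α β = 0)
    (Δ : Set V) (hΔΦ : Δ ⊆ Φ)
    (hbase : ∀ α ∈ Φ, ∃ c : V →₀ ℤ, ↑c.support ⊆ Δ ∧
      α = c.sum (fun β n => n • β) ∧ ((∀ β, 0 ≤ c β) ∨ (∀ β, c β ≤ 0)))
    (γ : V) (hγΦ : γ ∈ Φ)
    (hγpos : ∃ c : V →₀ ℤ, ↑c.support ⊆ Δ ∧ γ = c.sum (fun β n => n • β) ∧ ∀ β, 0 ≤ c β)
    (hγhigh : ∀ α ∈ Φ,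
      (∃ c : V →₀ ℤ, ↑c.support ⊆ Δ ∧ α = c.sum (fun β n => n • β) ∧ ∀ β, 0 ≤ c β) →
      ∃ c : V →₀ ℤ, ↑c.support ⊆ Δ ∧ γ - α = c.sum (fun β n => n • β) ∧ ∀ β, 0 ≤ c β)
    (x : Module.Dual ℝ V)
    (hx0 : ∀ α ∈ Δ, 0 ≤ x α) (hx1 : x γ ≤ 1) :
    {α ∈ Φ | ∃ n : ℤ, x α = n} =
      (AddSubgroup.closure ({α ∈ Δ | x α = 0} ∪ {β : V | β = -γ ∧ x γ = 1}) : Set V) ∩ Φ := by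
  set S : Set V := {α ∈ Δ | x α = 0} ∪ {β : V | β = -γ ∧ x γ = 1} with hSdef
  -- value of x on a Finsupp sum
  have hval : ∀ c : V →₀ ℤ, x (c.sum fun β n => n • β) = ∑ β ∈ c.support, (c β : ℝ) * x β := by
    intro c
    rw [map_finsuppSum]
    refine Finset.sum_congr rfl fun β _ => ?_
    show x ((c β) • β) = _
    rw [map_zsmul, zsmul_eq_mul]
  -- nonnegativity of each term
  have hterm : ∀ (c : V →₀ ℤ), ↑c.support ⊆ Δ → (∀ β, 0 ≤ c β) →
      ∀ β ∈ c.support, (0:ℝ) ≤ (c β : ℝ) * x β := by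
    intro c hcΔ hcpos β hβ
    exact mul_nonneg (by exact_mod_cast hcpos β) (hx0 β (hcΔ hβ))
  have hnn : ∀ (c : V →₀ ℤ), ↑c.support ⊆ Δ → (∀ β, 0 ≤ c β) →
      (0:ℝ) ≤ x (c.sum fun β n => n • β) := by
    intro c hcΔ hcpos
    rw [hval]
    exact Finset.sum_nonneg (hterm c hcΔ hcpos)
  -- if the value is zero, the sum lies in the closure of S
  have hzero : ∀ (c : V →₀ ℤ), ↑c.support ⊆ Δ → (∀ β, 0 ≤ c β) →
      x (c.sum fun β n => n • β) = 0 →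
      (c.sum fun β n => n • β) ∈ AddSubgroup.closure S := by
    intro c hcΔ hcpos hx
    rw [hval] at hx
    have hall := (Finset.sum_eq_zero_iff_of_nonneg (hterm c hcΔ hcpos)).mp hx
    refine AddSubgroup.sum_mem _ fun β hβ => AddSubgroup.zsmul_mem _ ?_ _
    have hcβ : (c β : ℝ) ≠ 0 := by
      exact_mod_cast Finsupp.mem_support_iff.mp hβ
    have hxβ : x β = 0 := by
      rcases mul_eq_zero.mp (hall β hβ) with h | h
      · exact absurd h hcβ
      · exact h
    exact AddSubgroup.subset_closure (Or.inl ⟨hcΔ hβ, hxβ⟩)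
  -- key lemma: positive roots with integral pairing lie in the closure
  have key : ∀ α ∈ Φ,
      (∃ c : V →₀ ℤ, ↑c.support ⊆ Δ ∧ α = c.sum (fun β n => n • β) ∧ ∀ β, 0 ≤ c β) →
      (∃ n : ℤ, x α = n) → α ∈ AddSubgroup.closure S := by
    rintro α hαΦ ⟨c, hcΔ, hsum, hcpos⟩ ⟨n, hn⟩
    obtain ⟨d, hdΔ, hdsum, hdpos⟩ := hγhigh α hαΦ ⟨c, hcΔ, hsum, hcpos⟩
    have h0 : (0:ℝ) ≤ x α := by rw [hsum]; exact hnn c hcΔ hcpos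
    have hd0 : (0:ℝ) ≤ x γ - x α := by
      have := hnn d hdΔ hdpos
      rwa [← hdsum, map_sub] at this
    have h1 : x α ≤ 1 := by linarith
    have hn01 : n = 0 ∨ n = 1 := by
      have h0' : (0:ℝ) ≤ (n:ℝ) := hn ▸ h0
      have h1' : (n:ℝ) ≤ 1 := hn ▸ h1
      have : (0:ℤ) ≤ n := by exact_mod_cast h0'
      have : n ≤ 1 := by exact_mod_cast h1'
      omega
    rcases hn01 with rfl | rfl
    · rw [hsum]
      exact hzero c hcΔ hcpos (by rw [← hsum, hn]; norm_num)
    · have hxα : x α = 1 := by rw [hn]; norm_num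
      have hxγ : x γ = 1 := by
        have : x γ - x α ≤ 0 := by linarith [hx1, hxα]
        linarith
      have hγmem : -γ ∈ AddSubgroup.closure S :=
        AddSubgroup.subset_closure (Or.inr ⟨rfl, hxγ⟩)
      have hdmem : γ - α ∈ AddSubgroup.closure S := by
        rw [hdsum]
        exact hzero d hdΔ hdpos (by rw [← hdsum, map_sub, hxγ, hxα]; ring)
      have : α = -(-γ) - (γ - α) := by abel
      rw [this]
      exact AddSubgroup.sub_mem _ (AddSubgroup.neg_mem _ hγmem) hdmem
  -- negation of a Finsupp sum
  have hneg : ∀ c : V →₀ ℤ, ((-c).sum fun β n => n • β) = -(c.sum fun β n => n • β) := by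
    intro c
    rw [Finsupp.sum, Finsupp.sum, Finsupp.support_neg, ← Finset.sum_neg_distrib]
    exact Finset.sum_congr rfl fun β _ => by simp [neg_smul]
  ext α
  simp only [Set.mem_setOf_eq, Set.mem_inter_iff, SetLike.mem_coe]
  constructor
  · rintro ⟨hαΦ, n, hn⟩
    refine ⟨?_, hαΦ⟩
    obtain ⟨c, hcΔ, hsum, hsign⟩ := hbase α hαΦ
    rcases hsign with hpos | hneg'
    · exact key α hαΦ ⟨c, hcΔ, hsum, hpos⟩ ⟨n, hn⟩
    · -- −α ∈ Φ
      have hnegα : -α ∈ Φ := by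
        have h := hrefl α hαΦ α hαΦ
        rw [h2 α hαΦ] at h
        have : α - (2:ℝ) • α = -α := by
          rw [two_smul]; abel
        rwa [this] at h
      have hnegmem : -α ∈ AddSubgroup.closure S := by
        refine key (-α) hnegα ⟨-c, ?_, ?_, ?_⟩ ⟨-n, by rw [map_neg, hn]; push_cast; ring⟩
        · rwa [Finsupp.support_neg]
        · rw [hneg, hsum]
        · intro β; simpa using hneg' β
      simpa using AddSubgroup.neg_mem _ hnegmem
  · rintro ⟨hcl, hαΦ⟩
    refine ⟨hαΦ, ?_⟩
    clear hαΦ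
    induction hcl using AddSubgroup.closure_induction with
    | mem β hβ =>
      rcases hβ with ⟨_, hβ0⟩ | ⟨hβγ, hγ1⟩
      · exact ⟨0, by rw [hβ0]; norm_num⟩
      · exact ⟨-1, by rw [hβγ, map_neg, hγ1]; norm_num⟩
    | zero => exact ⟨0, by simp⟩
    | add a b _ _ ha hb =>
      obtain ⟨m, hm⟩ := ha
      obtain ⟨k, hk⟩ := hb
      exact ⟨m + k, by rw [map_add, hm, hk]; push_cast; ring⟩
    | neg a _ ha =>
      obtain ⟨m, hm⟩ := ha
      exact ⟨-m, by rw [map_neg, hm]; push_cast; ring⟩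
end
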